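/- Let b, b₂, b₃ > 0 and b₁ > b₃, and define F(x) = b₁·exp(−b x²)/(1 + b₂·erf(√b·x)) − b₃·F1(x) for x ≥ 0, where F1(x) = exp(-x²)/erfc(x). Then the equation F(x) = x has a unique solution λ > 0. -/

import Mathlib

open Real Filter Topology Set

noncomputable def erf (x : ℝ) : ℝ := (2 / Real.sqrt Real.pi) * ∫ u in (0:ℝ)..x, Real.exp (-u^2)

noncomputable def erfc (x : ℝ) : ℝ := 1 - erf x

lemma contg : Continuous fun u : ℝ => Real.exp (-u^2) :=
  Real.continuous_exp.comp (continuous_pow 2).neg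

lemma intg : MeasureTheory.Integrable fun u : ℝ => Real.exp (-u^2) := by
  have := integrable_exp_neg_mul_sq (b := 1) one_pos
  simpa using this

lemma intug : MeasureTheory.Integrable fun u : ℝ => u * Real.exp (-u^2) := by
  have := integrable_mul_exp_neg_mul_sq (b := 1) one_pos
  simpa using this

lemma erf_hasDerivAt (x : ℝ) :
    HasDerivAt erf (2 / Real.sqrt Real.pi * Real.exp (-x^2)) x := by
  have h := (contg.integral_hasStrictDerivAt 0 x).hasDerivAt
  exact h.const_mul (2 / Real.sqrt Real.pi)

lemma erf_zero : erf 0 = 0 := by simp [erf]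

lemma erf_nonneg {x : ℝ} (hx : 0 ≤ x) : 0 ≤ erf x := by
  refine mul_nonneg (by positivity) ?_
  exact intervalIntegral.integral_nonneg hx fun u _ => (Real.exp_pos _).le

lemma erfc_eq {x : ℝ} (hx : 0 ≤ x) :
    erfc x = (2 / Real.sqrt Real.pi) * ∫ u in Ioi x, Real.exp (-u^2) := by
  have h0 : ∫ u in Ioi (0:ℝ), Real.exp (-u^2) = Real.sqrt Real.pi / 2 := by
    have := integral_gaussian_Ioi 1
    simpa using this
  have hsplit : (∫ u in Ioc (0:ℝ) x, Real.exp (-u^2)) + ∫ u in Ioi x, Real.exp (-u^2)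
      = Real.sqrt Real.pi / 2 := by
    rw [← h0, ← Ioc_union_Ioi_eq_Ioi hx]
    exact (MeasureTheory.setIntegral_union (Ioc_disjoint_Ioi le_rfl) measurableSet_Ioi
      intg.integrableOn intg.integrableOn).symm
  have h1 : (∫ u in (0:ℝ)..x, Real.exp (-u^2)) = ∫ u in Ioc (0:ℝ) x, Real.exp (-u^2) :=
    intervalIntegral.integral_of_le hx
  have hc : (2 / Real.sqrt Real.pi) * (Real.sqrt Real.pi / 2) = 1 := by
    have : Real.sqrt Real.pi ≠ 0 := (Real.sqrt_pos.2 Real.pi_pos).ne'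
    field_simp
  have h2 : (2 / Real.sqrt Real.pi) * (∫ u in Ioc (0:ℝ) x, Real.exp (-u^2))
      + (2 / Real.sqrt Real.pi) * (∫ u in Ioi x, Real.exp (-u^2)) = 1 := by
    rw [← mul_add, hsplit]; exact hc
  simp only [erfc, erf, h1]
  linarith

lemma erfc_pos {x : ℝ} (hx : 0 ≤ x) : 0 < erfc x := by
  rw [erfc_eq hx]
  refine mul_pos (by positivity) ?_
  rw [MeasureTheory.setIntegral_pos_iff_support_of_nonneg_ae
    (MeasureTheory.ae_of_all _ fun u => (Real.exp_pos _).le) intg.integrableOn]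
  have hsupp : (Function.support fun u : ℝ => Real.exp (-u^2)) = Set.univ := by
    ext u; simp [Function.mem_support, (Real.exp_pos _).ne']
  rw [hsupp, Set.univ_inter]
  simp [Real.volume_Ioi]

lemma integral_u_gauss (x : ℝ) :
    ∫ u in Ioi x, u * Real.exp (-u^2) = Real.exp (-x^2) / 2 := by
  have hderiv : ∀ u ∈ Ioi x, HasDerivAt (fun u : ℝ => -Real.exp (-u^2) / 2)
      (u * Real.exp (-u^2)) u := by
    intro u _
    have h1 : HasDerivAt (fun u : ℝ => -u^2) (-(2*u)) u := by
      simpa using (hasDerivAt_pow 2 u).fun_neg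
    have h2 := h1.exp
    have h3 := (h2.fun_neg).div_const 2
    refine h3.congr_deriv ?_
    ring
  have hcont : ContinuousWithinAt (fun u : ℝ => -Real.exp (-u^2) / 2) (Ici x) x :=
    ((contg.neg.div_const 2).continuousAt).continuousWithinAt
  have htend : Tendsto (fun u : ℝ => -Real.exp (-u^2) / 2) atTop (𝓝 0) := by
    have : Tendsto (fun u : ℝ => -u^2) atTop atBot := by
      apply tendsto_neg_atBot_iff.mpr
      exact tendsto_pow_atTop (by norm_num)
    have := (Real.tendsto_exp_atBot.comp this).neg.div_const 2
    simpa using this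
  have := MeasureTheory.integral_Ioi_of_hasDerivAt_of_tendsto hcont hderiv
    intug.integrableOn htend
  rw [this]; ring

lemma mills {x : ℝ} (hx : 0 < x) :
    ∫ u in Ioi x, Real.exp (-u^2) ≤ Real.exp (-x^2) / (2*x) := by
  have hint2 : MeasureTheory.IntegrableOn (fun u : ℝ => (1/x) * (u * Real.exp (-u^2)))
      (Ioi x) := intug.integrableOn.const_mul (1/x)
  have hmono : ∫ u in Ioi x, Real.exp (-u^2)
      ≤ ∫ u in Ioi x, (1/x) * (u * Real.exp (-u^2)) := by
    refine MeasureTheory.setIntegral_mono_on intg.integrableOn hint2 measurableSet_Ioi ?_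
    intro u hu
    have hux : x ≤ u := le_of_lt hu
    calc Real.exp (-u^2) = (1/x) * (x * Real.exp (-u^2)) := by field_simp
      _ ≤ (1/x) * (u * Real.exp (-u^2)) := by
          apply mul_le_mul_of_nonneg_left _ (by positivity)
          exact mul_le_mul_of_nonneg_right hux (Real.exp_pos _).le
  rw [MeasureTheory.integral_const_mul, integral_u_gauss] at hmono
  calc ∫ u in Ioi x, Real.exp (-u^2) ≤ (1/x) * (Real.exp (-x^2)/2) := hmono
    _ = Real.exp (-x^2) / (2*x) := by ring

lemma G_deriv_aux (b b1 b2 b3 : ℝ) (hb : 0 < b) (hb2 : 0 < b2) (hb3 : 0 < b3)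
    (hb1pos : 0 < b1) (x : ℝ) (hx : 0 ≤ x) :
    ∃ d, HasDerivAt (fun x : ℝ =>
      b1 * Real.exp (-(b * x^2)) / (1 + b2 * erf (Real.sqrt b * x))
        - b3 * (Real.exp (-x^2) / erfc x) - x) d x ∧ d ≤ -1 := by
  have hD : 0 < 1 + b2 * erf (Real.sqrt b * x) := by
    have h1 : 0 ≤ erf (Real.sqrt b * x) := erf_nonneg (by positivity)
    nlinarith
  have hE : 0 < erfc x := erfc_pos hx
  have hcpos : 0 < 2 / Real.sqrt Real.pi := by positivity
  have hinner1 : HasDerivAt (fun x : ℝ => -(b * x^2)) (-(b*(2*x))) x := by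
    simpa using ((hasDerivAt_pow 2 x).const_mul b).fun_neg
  have hN : HasDerivAt (fun x : ℝ => b1 * Real.exp (-(b * x^2)))
      (b1 * (Real.exp (-(b*x^2)) * (-(b*(2*x))))) x := (hinner1.exp).const_mul b1
  have hlin : HasDerivAt (fun x : ℝ => Real.sqrt b * x) (Real.sqrt b) x := by
    simpa using (hasDerivAt_id x).const_mul (Real.sqrt b)
  have herfb : HasDerivAt (fun x : ℝ => erf (Real.sqrt b * x))
      (2 / Real.sqrt Real.pi * Real.exp (-(Real.sqrt b * x)^2) * Real.sqrt b) x :=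
    (erf_hasDerivAt (Real.sqrt b * x)).comp x hlin
  have hDd : HasDerivAt (fun x : ℝ => 1 + b2 * erf (Real.sqrt b * x))
      (b2 * (2 / Real.sqrt Real.pi * Real.exp (-(Real.sqrt b * x)^2) * Real.sqrt b)) x := by
    simpa using (herfb.const_mul b2).const_add 1
  have hphi : HasDerivAt (fun x : ℝ => Real.exp (-x^2))
      (Real.exp (-x^2) * (-(2*x))) x := by
    have h1 : HasDerivAt (fun x : ℝ => -x^2) (-(2*x)) x := by
      simpa using (hasDerivAt_pow 2 x).fun_neg
    exact h1.exp
  have hEd : HasDerivAt erfc (-(2 / Real.sqrt Real.pi * Real.exp (-x^2))) x := by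
    have := (hasDerivAt_const x (1:ℝ)).fun_sub (erf_hasDerivAt x)
    rw [show erfc = fun y => 1 - erf y from rfl]
    simpa using this
  have hT1 := hN.div hDd hD.ne'
  have hT2 := (hphi.div hEd hE.ne').const_mul b3
  have hGd := (hT1.sub hT2).sub (hasDerivAt_id' (x := x))
  refine ⟨_, hGd, ?_⟩
  have hexp1 : 0 < Real.exp (-(b*x^2)) := Real.exp_pos _
  have hexp2 : 0 < Real.exp (-x^2) := Real.exp_pos _
  have hexp3 : 0 < Real.exp (-(Real.sqrt b * x)^2) := Real.exp_pos _
  have hsb : 0 < Real.sqrt b := Real.sqrt_pos.2 hb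
  -- first term nonpositive
  have h1 : b1 * (Real.exp (-(b*x^2)) * (-(b*(2*x)))) ≤ 0 := by
    nlinarith [mul_nonneg (mul_nonneg hb1pos.le hexp1.le)
      (mul_nonneg hb.le (by linarith : (0:ℝ) ≤ 2*x))]
  have hfirst : (b1 * (Real.exp (-(b*x^2)) * (-(b*(2*x)))) * (1 + b2 * erf (Real.sqrt b * x))
      - b1 * Real.exp (-(b*x^2)) * (b2 * (2 / Real.sqrt Real.pi
        * Real.exp (-(Real.sqrt b * x)^2) * Real.sqrt b)))
      / (1 + b2 * erf (Real.sqrt b * x))^2 ≤ 0 := by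
    apply div_nonpos_of_nonpos_of_nonneg _ (by positivity)
    nlinarith [mul_nonpos_of_nonpos_of_nonneg h1 hD.le,
      mul_pos (mul_pos hb1pos hexp1)
        (mul_pos hb2 (mul_pos (mul_pos hcpos hexp3) hsb))]
  -- Mills bound
  have hmb : 2 * x * erfc x ≤ 2 / Real.sqrt Real.pi * Real.exp (-x^2) := by
    rcases eq_or_lt_of_le hx with h | h
    · rw [← h]
      have h0 : (2:ℝ) * 0 * erfc 0 = 0 := by ring
      rw [h0]
      positivity
    · have hm := mills h
      rw [erfc_eq hx]
      have h2 : 2 / Real.sqrt Real.pi * (∫ u in Ioi x, Real.exp (-u^2))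
          ≤ 2 / Real.sqrt Real.pi * (Real.exp (-x^2)/(2*x)) :=
        mul_le_mul_of_nonneg_left hm hcpos.le
      calc 2 * x * (2 / Real.sqrt Real.pi * ∫ u in Ioi x, Real.exp (-u^2))
          ≤ 2 * x * (2 / Real.sqrt Real.pi * (Real.exp (-x^2)/(2*x))) := by
            apply mul_le_mul_of_nonneg_left h2 (by linarith)
        _ = 2 / Real.sqrt Real.pi * Real.exp (-x^2) := by
            field_simp
  have hsecond : 0 ≤ b3 * ((Real.exp (-x^2) * (-(2*x)) * erfc x
      - Real.exp (-x^2) * -(2 / Real.sqrt Real.pi * Real.exp (-x^2))) / erfc x ^ 2) := by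
    apply mul_nonneg hb3.le
    apply div_nonneg _ (by positivity)
    have heq : Real.exp (-x^2) * (-(2*x)) * erfc x
        - Real.exp (-x^2) * -(2 / Real.sqrt Real.pi * Real.exp (-x^2))
        = Real.exp (-x^2) * (2 / Real.sqrt Real.pi * Real.exp (-x^2) - 2 * x * erfc x) := by
      ring
    rw [heq]
    exact mul_nonneg hexp2.le (by linarith)
  linarith

theorem F_unique_fixed_point (b b1 b2 b3 : ℝ) (hb : 0 < b) (hb2 : 0 < b2) (hb3 : 0 < b3)
    (hb1 : b3 < b1) :
    ∃! x : ℝ, 0 < x ∧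
      b1 * Real.exp (-(b * x^2)) / (1 + b2 * erf (Real.sqrt b * x))
        - b3 * (Real.exp (-x^2) / erfc x) = x := by
  have hb1pos : 0 < b1 := hb3.trans hb1
  set G : ℝ → ℝ := fun x =>
    b1 * Real.exp (-(b * x^2)) / (1 + b2 * erf (Real.sqrt b * x))
      - b3 * (Real.exp (-x^2) / erfc x) - x with hG
  have hderiv : ∀ x : ℝ, 0 ≤ x → ∃ d, HasDerivAt G d x ∧ d ≤ -1 := by
    intro x hx
    obtain ⟨d, hd, hle⟩ := G_deriv_aux b b1 b2 b3 hb hb2 hb3 hb1pos x hx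
    exact ⟨d, by rw [hG]; exact hd, hle⟩
  have hcont : ContinuousOn G (Ici 0) := by
    intro x hx
    obtain ⟨d, hd, _⟩ := hderiv x hx
    exact hd.continuousAt.continuousWithinAt
  have hanti : StrictAntiOn G (Ici 0) := by
    apply strictAntiOn_of_deriv_neg (convex_Ici 0) hcont
    intro x hx
    rw [interior_Ici] at hx
    obtain ⟨d, hd, hle⟩ := hderiv x (le_of_lt hx)
    rw [hd.deriv]
    linarith
  have hG0 : G 0 = b1 - b3 := by
    rw [hG]
    simp [erf_zero, erfc, Real.exp_zero]
  have hG0pos : 0 < G 0 := by rw [hG0]; linarith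
  have hGbig : G (b1 + 1) ≤ 0 := by
    have hx : (0:ℝ) ≤ b1 + 1 := by linarith
    have hT1 : b1 * Real.exp (-(b * (b1+1)^2)) / (1 + b2 * erf (Real.sqrt b * (b1+1))) ≤ b1 := by
      have h1 : Real.exp (-(b * (b1+1)^2)) ≤ 1 := by
        rw [Real.exp_le_one_iff]; nlinarith
      have h2 : (1:ℝ) ≤ 1 + b2 * erf (Real.sqrt b * (b1+1)) := by
        have := erf_nonneg (x := Real.sqrt b * (b1+1)) (by positivity)
        nlinarith
      calc b1 * Real.exp (-(b * (b1+1)^2)) / (1 + b2 * erf (Real.sqrt b * (b1+1)))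
          ≤ b1 * Real.exp (-(b * (b1+1)^2)) / 1 :=
            div_le_div_of_nonneg_left (by positivity) one_pos h2
        _ = b1 * Real.exp (-(b * (b1+1)^2)) := by rw [div_one]
        _ ≤ b1 * 1 := by nlinarith
        _ = b1 := mul_one b1
    have hT2 : 0 ≤ b3 * (Real.exp (-(b1+1)^2) / erfc (b1+1)) := by
      have := erfc_pos hx
      positivity
    rw [hG]
    simp only
    linarith
  have hab : (0:ℝ) ≤ b1 + 1 := by linarith
  have hIVT := intermediate_value_Icc' hab (hcont.mono Icc_subset_Ici_self)
  have hmem : (0:ℝ) ∈ Icc (G (b1+1)) (G 0) := ⟨hGbig, hG0pos.le⟩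
  obtain ⟨l, hl, hGl⟩ := hIVT hmem
  have hlpos : 0 < l := by
    rcases eq_or_lt_of_le hl.1 with h | h
    · exfalso; rw [← h] at hGl; linarith
    · exact h
  refine ⟨l, ⟨hlpos, ?_⟩, ?_⟩
  · have h := hGl
    rw [hG] at h
    simp only at h
    linarith
  · rintro y ⟨hy, hFy⟩
    have hGy : G y = 0 := by rw [hG]; simp only; linarith
    have heq : G y = G l := by rw [hGy, hGl]
    exact hanti.injOn (le_of_lt hy) hl.1 heq
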